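/- Let X be the one-point compactification of a countably infinite discrete set 𝓕 with limit point G, and let R_X be the ring of continuous functions X → ℚ (with ℚ discrete). Then the sequence 0 → R_X → (∏_{F∈𝓕} ℚ) × ℚ → 𝓘⁻¹∏_{F∈𝓕} ℚ → 0 is exact, where the first map sends a continuous function f to (f|_𝓕, f(G)), the second map sends (g, v) to [g] − [v·1], and [·] denotes the class in the localization 𝓘⁻¹∏ℚ at idempotents with cofinite support. -/

import Mathlib

/-- The idempotent of `∏_{F ∈ ι} ℚ` with support `U`. -/
noncomputable def eU {ι : Type} (U : Set ι) : ι → ℚ :=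
  Set.indicator U (fun _ => (1 : ℚ))

/-- The multiplicatively closed set `𝓘` of idempotents of `∏_{F ∈ ι} ℚ`
with cofinite support. -/
noncomputable def Icof (ι : Type) : Submonoid (ι → ℚ) where
  carrier := {f | ∃ U : Set ι, Uᶜ.Finite ∧ f = eU U}
  one_mem' := ⟨Set.univ, by simp, by funext x; simp [eU]⟩
  mul_mem' := by
    rintro f g ⟨U, hU, rfl⟩ ⟨V, hV, rfl⟩
    refine ⟨U ∩ V, ?_, ?_⟩
    · rw [Set.compl_inter]; exact hU.union hV
    · funext x
      by_cases hx1 : x ∈ U <;> by_cases hx2 : x ∈ V <;>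
        simp [eU, Set.indicator_apply, hx1, hx2]

/-- `R_X → (∏_{F∈𝓕} ℚ) × ℚ`, `f ↦ (f|_𝓕, f(G))`, where `R_X` is the ring of
continuous (= locally constant) functions on the one-point compactification. -/
noncomputable def alphaMap :
    LocallyConstant (OnePoint ℕ) ℚ → (ℕ → ℚ) × ℚ :=
  fun f => (fun n => f (OnePoint.some n), f OnePoint.infty)

/-- `(∏_{F∈𝓕} ℚ) × ℚ → 𝓘⁻¹ ∏_{F∈𝓕} ℚ`, `(g, v) ↦ [g] − [v·1]`. -/
noncomputable def betaMap :
    (ℕ → ℚ) × ℚ → Localization (Icof ℕ) :=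
  fun p => algebraMap (ℕ → ℚ) (Localization (Icof ℕ)) p.1 -
    algebraMap (ℕ → ℚ) (Localization (Icof ℕ)) (fun _ => p.2)

lemma eU_idem {ι : Type} (U : Set ι) : eU U * eU U = eU U := by
  funext x; by_cases hx : x ∈ U <;> simp [eU, Set.indicator_apply, hx]

lemma beta_zero_iff (p : (ℕ → ℚ) × ℚ) :
    betaMap p = 0 ↔ {n | p.1 n = p.2}ᶜ.Finite := by
  rw [betaMap, sub_eq_zero, IsLocalization.eq_iff_exists (Icof ℕ)]
  constructor
  · rintro ⟨⟨c, U, hU, rfl⟩, hc⟩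
    refine hU.subset ?_
    intro n hn
    by_contra h
    simp only [Set.mem_compl_iff, Set.mem_setOf_eq, not_not] at h hn
    have := congrFun hc n
    simp only [Pi.mul_apply, eU, Set.indicator_of_mem h, one_mul] at this
    exact hn this
  · intro h
    refine ⟨⟨eU {n | p.1 n = p.2}, {n | p.1 n = p.2}, h, rfl⟩, ?_⟩
    funext n
    by_cases hn : p.1 n = p.2 <;>
      simp [eU, Set.indicator_apply, hn, Set.mem_setOf_eq]

noncomputable def mkLC (g : ℕ → ℚ) (v : ℚ) (h : {n | g n = v}ᶜ.Finite) :
    LocallyConstant (OnePoint ℕ) ℚ where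
  toFun := fun x => x.elim v g
  isLocallyConstant := by
    intro s
    by_cases hv : v ∈ s
    · rw [OnePoint.isOpen_iff_of_mem' (by simpa using hv)]
      refine ⟨?_, isOpen_discrete _⟩
      refine (h.subset ?_).isCompact
      intro n hn
      simp only [Set.mem_compl_iff, Set.mem_preimage, Set.mem_setOf_eq] at hn ⊢
      intro hgn
      exact hn (by simp [OnePoint.elim_some, hgn, hv])
    · rw [OnePoint.isOpen_iff_of_notMem (by simpa using hv)]
      exact isOpen_discrete _

/-- The sequence `0 → R_X → (∏_{F∈𝓕} ℚ) × ℚ → 𝓘⁻¹ ∏_{F∈𝓕} ℚ → 0` is exact: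
`α` is injective, the kernel of `β` is exactly the image of `α`, and `β` is
surjective. -/
theorem stmt8 :
    Function.Injective alphaMap ∧
    (∀ p : (ℕ → ℚ) × ℚ, betaMap p = 0 ↔ ∃ f, alphaMap f = p) ∧
    Function.Surjective betaMap := by
  refine ⟨?_, ?_, ?_⟩
  · intro f g h
    ext x
    cases x with
    | infty => exact congrArg Prod.snd h
    | coe n => exact congrFun (congrArg Prod.fst h) n
  · intro p
    rw [beta_zero_iff]
    constructor
    · intro h
      exact ⟨mkLC p.1 p.2 h, rfl⟩
    · rintro ⟨f, rfl⟩
      -- f locally constant; preimage of {f ∞} is open containing ∞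
      have ho : IsOpen (f ⁻¹' {f OnePoint.infty}) := f.isLocallyConstant _
      rw [OnePoint.isOpen_iff_of_mem' (by simp)] at ho
      have hfin : ((OnePoint.some : ℕ → OnePoint ℕ) ⁻¹' (f ⁻¹' {f OnePoint.infty}))ᶜ.Finite :=
        ho.1.finite ⟨by infer_instance⟩
      refine hfin.subset ?_
      intro n hn
      simpa [alphaMap] using hn
  · intro z
    induction z using Localization.induction_on with
    | H y =>
    obtain ⟨g, e⟩ := y
    obtain ⟨U, hU, he⟩ := e.2
    refine ⟨(g * e, 0), ?_⟩
    have h0 : ((fun _ => (0:ℚ)) : ℕ → ℚ) = 0 := rfl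
    rw [betaMap, h0, map_zero, sub_zero, ← Localization.mk_one_eq_algebraMap]
    rw [Localization.mk_eq_mk_iff, Localization.r_iff_exists]
    refine ⟨e, ?_⟩
    have : (e : ℕ → ℚ) * e = e := by rw [he]; exact eU_idem U
    show (e:ℕ→ℚ) * (e * (g * e)) = e * (1 * g)
    calc (e:ℕ→ℚ) * (e * (g * e)) = (e * e * e) * g := by ring
    _ = e * (1 * g) := by rw [this, this]; ring
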